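/- Let C_{d_A}, C_{d_B} be second-order cones in ℝ^{d_A}, ℝ^{d_B}. If E ∈ ℝ^{d_A×d_B} lies in the minimal tensor product cone conv{ x yᵀ : x ∈ C_{d_A}, y ∈ C_{d_B} }, then the trace norm of the submatrix Ē (obtained by deleting row 0 and column 0) satisfies ‖Ē‖₁ ≤ E₀₀. Conversely, if all cross terms E_{i0}, E_{0j} (i,j ≥ 1) vanish and ‖Ē‖₁ ≤ E₀₀, then E lies in the minimal tensor product cone. -/

import Mathlib

open Matrix

/-- The second-order (ice cream) cone in `ℝ^{k+1}`, with distinguished 0-th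
coordinate. -/
def soCone (k : ℕ) : Set (Fin (k + 1) → ℝ) :=
  {x | Real.sqrt (∑ i : Fin k, (x i.succ) ^ 2) ≤ x 0}

/-- The minimal tensor product of two second-order cones, under the matrix
identification `ℝ^{d_A} ⊗ ℝ^{d_B} ≅ ℝ^{d_A × d_B}`. -/
noncomputable def minTensorSO (a b : ℕ) : Set (Matrix (Fin (a + 1)) (Fin (b + 1)) ℝ) :=
  convexHull ℝ
    {X | ∃ x ∈ soCone a, ∃ y ∈ soCone b, X = Matrix.of fun i j => x i * y j}

/-- The trace norm (sum of singular values) of a real matrix. -/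
noncomputable def traceNorm {n m : ℕ} (M : Matrix (Fin n) (Fin m) ℝ) : ℝ :=
  ∑ i, Real.sqrt ((Matrix.isHermitian_conjTranspose_mul_self M).eigenvalues i)


lemma bessel_aux {n m : ℕ} (u : Fin m → Fin n → ℝ)
    (hn : ∀ k, ∑ i, (u k i)^2 ≤ 1)
    (ho : ∀ k l, k ≠ l → ∑ i, u k i * u l i = 0) (x : Fin n → ℝ) :
    ∑ k, (∑ i, u k i * x i)^2 ≤ ∑ i, (x i)^2 := by
  set c : Fin m → ℝ := fun k => ∑ i, u k i * x i with hc
  have key : (0:ℝ) ≤ ∑ i, (x i - ∑ k, c k * u k i)^2 :=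
    Finset.sum_nonneg fun i _ => sq_nonneg _
  have e1 : ∀ i : Fin n, (x i - ∑ k, c k * u k i)^2
      = (x i)^2 - 2 * (∑ k, c k * (u k i * x i))
        + ∑ k, ∑ l, (c k * c l) * (u k i * u l i) := by
    intro i
    have hS2 : (∑ k, c k * u k i)^2 = ∑ k, ∑ l, (c k * c l) * (u k i * u l i) := by
      rw [sq, Finset.sum_mul_sum]
      exact Finset.sum_congr rfl fun k _ => Finset.sum_congr rfl fun l _ => by ring
    have hxS : x i * (∑ k, c k * u k i) = ∑ k, c k * (u k i * x i) := by
      rw [Finset.mul_sum]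
      exact Finset.sum_congr rfl fun k _ => by ring
    rw [sub_sq, hS2, mul_assoc, hxS]
  have e2 : ∑ i, (x i - ∑ k, c k * u k i)^2
      = ∑ i, (x i)^2 - 2 * ∑ k, (c k)^2 + ∑ k, (c k)^2 * ∑ i, (u k i)^2 := by
    rw [Finset.sum_congr rfl fun i _ => e1 i]
    rw [Finset.sum_add_distrib, Finset.sum_sub_distrib]
    congr 1
    · congr 1
      rw [← Finset.mul_sum]
      congr 1
      rw [Finset.sum_comm]
      refine Finset.sum_congr rfl fun k _ => ?_
      rw [← Finset.mul_sum]
      simp only [hc]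
      ring
    · rw [Finset.sum_comm]
      refine Finset.sum_congr rfl fun k _ => ?_
      rw [Finset.sum_comm]
      rw [Finset.sum_eq_single k]
      · rw [← Finset.mul_sum]
        congr 1
        · ring
        · exact Finset.sum_congr rfl fun i _ => (pow_two _).symm
      · intro l _ hl
        rw [← Finset.mul_sum, ho k l (Ne.symm hl), mul_zero]
      · simp
  have e3 : ∑ k, (c k)^2 * ∑ i, (u k i)^2 ≤ ∑ k, (c k)^2 := by
    refine Finset.sum_le_sum fun k _ => ?_
    calc (c k)^2 * ∑ i, (u k i)^2 ≤ (c k)^2 * 1 :=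
          mul_le_mul_of_nonneg_left (hn k) (sq_nonneg _)
      _ = (c k)^2 := mul_one _
  rw [e2] at key
  linarith

lemma svd_aux {n m : ℕ} (M : Matrix (Fin n) (Fin m) ℝ) :
    ∃ (σ : Fin m → ℝ) (u : Fin m → Fin n → ℝ) (v : Fin m → Fin m → ℝ),
      (∀ k, 0 ≤ σ k) ∧ (∑ k, σ k = traceNorm M) ∧
      (∀ k, ∑ i, (u k i)^2 ≤ 1) ∧
      (∀ k, σ k ≠ 0 → ∑ i, (u k i)^2 = 1) ∧
      (∀ k, ∑ j, (v k j)^2 = 1) ∧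
      (∀ k l, k ≠ l → ∑ i, u k i * u l i = 0) ∧
      (∀ k l, k ≠ l → ∑ j, v k j * v l j = 0) ∧
      (∀ i j, M i j = ∑ k, σ k * (u k i * v k j)) := by
  classical
  set h := Matrix.isHermitian_conjTranspose_mul_self M with hh
  set v : Fin m → Fin m → ℝ := fun k => ⇑(h.eigenvectorBasis k) with hv
  -- orthonormality of v
  have hv_norm : ∀ k, ∑ j, (v k j)^2 = 1 := by
    intro k
    have h2 : (inner ℝ (h.eigenvectorBasis k) (h.eigenvectorBasis k) : ℝ) = 1 := by
      rw [real_inner_self_eq_norm_sq, h.eigenvectorBasis.orthonormal.1 k]; norm_num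
    rw [PiLp.inner_apply] at h2
    simp [sq] at h2
    rw [← h2]
    exact Finset.sum_congr rfl fun j _ => sq _
  have hv_orth : ∀ k l, k ≠ l → ∑ j, v k j * v l j = 0 := by
    intro k l hkl
    have h0 := h.eigenvectorBasis.orthonormal.2 hkl
    simp [PiLp.inner_apply] at h0
    rw [← h0]
    exact Finset.sum_congr rfl fun j _ => mul_comm _ _
  -- eigenvalue equation
  have heig : ∀ k, (Mᴴ * M) *ᵥ v k = h.eigenvalues k • v k := fun k =>
    h.mulVec_eigenvectorBasis k
  -- dot product transfer
  have hdot : ∀ (x y : Fin m → ℝ), x ⬝ᵥ ((Mᴴ * M) *ᵥ y) = (M *ᵥ x) ⬝ᵥ (M *ᵥ y) := by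
    intro x y
    rw [← Matrix.mulVec_mulVec, Matrix.conjTranspose_eq_transpose_of_trivial,
      Matrix.dotProduct_mulVec, Matrix.vecMul_transpose]
  have hMvMv : ∀ k l, (M *ᵥ v k) ⬝ᵥ (M *ᵥ v l) = h.eigenvalues l * (v k ⬝ᵥ v l) := by
    intro k l
    rw [← hdot, heig, dotProduct_smul, smul_eq_mul]
  have hmu : ∀ k, ∑ i, ((M *ᵥ v k) i)^2 = h.eigenvalues k := by
    intro k
    have := hMvMv k k
    rw [dotProduct, dotProduct] at this
    rw [Finset.sum_congr rfl fun i _ => pow_two _]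
    rw [this, Finset.sum_congr rfl fun j _ => (pow_two (v k j)).symm, hv_norm, mul_one]
  have hmu_nonneg : ∀ k, 0 ≤ h.eigenvalues k := fun k =>
    (hmu k) ▸ Finset.sum_nonneg fun i _ => sq_nonneg _
  set σ : Fin m → ℝ := fun k => Real.sqrt (h.eigenvalues k) with hσ
  have hσ_nonneg : ∀ k, 0 ≤ σ k := fun k => Real.sqrt_nonneg _
  have hσsq : ∀ k, σ k ^ 2 = h.eigenvalues k := fun k => Real.sq_sqrt (hmu_nonneg k)
  -- if σ k = 0 then M *ᵥ v k = 0
  have hMv0 : ∀ k, σ k = 0 → M *ᵥ v k = 0 := by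
    intro k hk
    have hz : ∑ i, ((M *ᵥ v k) i)^2 = 0 := by
      rw [hmu k, ← hσsq k, hk]; norm_num
    funext i
    have := (Finset.sum_eq_zero_iff_of_nonneg (fun i _ => sq_nonneg ((M *ᵥ v k) i))).1 hz i
      (Finset.mem_univ i)
    exact pow_eq_zero_iff (n := 2) (by norm_num) |>.1 this
  set u : Fin m → Fin n → ℝ := fun k => if σ k = 0 then 0 else (σ k)⁻¹ • (M *ᵥ v k) with hu
  have hMv : ∀ k, M *ᵥ v k = fun i => σ k * u k i := by
    intro k
    by_cases hk : σ k = 0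
    · funext i; rw [hMv0 k hk]; simp [hu, hk]
    · funext i
      simp only [hu, if_neg hk, Pi.smul_apply, smul_eq_mul]
      field_simp
  have hu_normsq : ∀ k, σ k ≠ 0 → ∑ i, (u k i)^2 = 1 := by
    intro k hk
    simp only [hu, if_neg hk, Pi.smul_apply, smul_eq_mul, mul_pow]
    rw [← Finset.mul_sum, hmu k, ← hσsq k]
    field_simp
  have hu_norm_le : ∀ k, ∑ i, (u k i)^2 ≤ 1 := by
    intro k
    by_cases hk : σ k = 0
    · simp [hu, hk]
    · rw [hu_normsq k hk]
  have hu_orth : ∀ k l, k ≠ l → ∑ i, u k i * u l i = 0 := by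
    intro k l hkl
    by_cases hk : σ k = 0
    · simp [hu, hk]
    by_cases hl : σ l = 0
    · simp [hu, hl]
    simp only [hu, if_neg hk, if_neg hl, Pi.smul_apply, smul_eq_mul]
    have : ∑ i, (σ k)⁻¹ * (M *ᵥ v k) i * ((σ l)⁻¹ * (M *ᵥ v l) i)
        = (σ k)⁻¹ * (σ l)⁻¹ * ((M *ᵥ v k) ⬝ᵥ (M *ᵥ v l)) := by
      rw [dotProduct, Finset.mul_sum]
      exact Finset.sum_congr rfl fun i _ => by ring
    rw [this, hMvMv k l, dotProduct,
      Finset.sum_congr rfl fun j _ => rfl, hv_orth k l hkl, mul_zero, mul_zero]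
  -- decomposition
  have hdec : ∀ i j, M i j = ∑ k, σ k * (u k i * v k j) := by
    intro i j
    have hsingle : ∀ l : Fin m, (Pi.single j 1 : Fin m → ℝ) l = ∑ k, v k j * v k l := by
      intro l
      simp only [hv]
      have key := congrArg (fun x : EuclideanSpace ℝ (Fin m) => x l)
        (h.eigenvectorBasis.sum_repr' (EuclideanSpace.single j 1))
      have h2 : ∀ k, (inner ℝ (h.eigenvectorBasis k) (EuclideanSpace.single j (1:ℝ)) : ℝ)
          = h.eigenvectorBasis k j := by
        intro k; simp [PiLp.inner_apply, EuclideanSpace.single_apply]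
      simp only [WithLp.ofLp_sum, Finset.sum_apply] at key
      simp only [WithLp.ofLp_smul, Pi.smul_apply, PiLp.smul_apply, smul_eq_mul, h2] at key
      rw [key]
      simp [EuclideanSpace.single_apply, Pi.single_apply, eq_comm]
    calc M i j = ∑ l, M i l * (Pi.single j 1 : Fin m → ℝ) l := by
          simp [Pi.single_apply]
      _ = ∑ l, M i l * ∑ k, v k j * v k l := by
          exact Finset.sum_congr rfl fun l _ => by rw [hsingle l]
      _ = ∑ l, ∑ k, v k j * (M i l * v k l) := by
          refine Finset.sum_congr rfl fun l _ => ?_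
          rw [Finset.mul_sum]
          exact Finset.sum_congr rfl fun k _ => by ring
      _ = ∑ k, ∑ l, v k j * (M i l * v k l) := Finset.sum_comm
      _ = ∑ k, v k j * (M *ᵥ v k) i := by
          refine Finset.sum_congr rfl fun k _ => ?_
          rw [← Finset.mul_sum, Matrix.mulVec, dotProduct]
      _ = ∑ k, σ k * (u k i * v k j) := by
          refine Finset.sum_congr rfl fun k _ => ?_
          rw [hMv k]
          ring
  exact ⟨σ, u, v, hσ_nonneg, rfl, hu_norm_le, hu_normsq, hv_norm, hu_orth, hv_orth, hdec⟩

lemma soCone_smul {k : ℕ} (c : ℝ) (hc : 0 ≤ c) {x : Fin (k+1) → ℝ} (hx : x ∈ soCone k) :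
    c • x ∈ soCone k := by
  simp only [soCone, Set.mem_setOf_eq, Pi.smul_apply, smul_eq_mul] at hx ⊢
  have : ∑ i : Fin k, (c * x i.succ)^2 = c^2 * ∑ i : Fin k, (x i.succ)^2 := by
    rw [Finset.mul_sum]
    exact Finset.sum_congr rfl fun i _ => by ring
  rw [this, Real.sqrt_mul (sq_nonneg c), Real.sqrt_sq hc]
  exact mul_le_mul_of_nonneg_left hx hc

lemma soCone_cons {k : ℕ} (w : Fin k → ℝ) (hw : ∑ i, (w i)^2 ≤ 1) :
    Fin.cons 1 w ∈ soCone k := by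
  simp only [soCone, Set.mem_setOf_eq, Fin.cons_succ, Fin.cons_zero]
  calc Real.sqrt (∑ i, (w i)^2) ≤ Real.sqrt 1 := Real.sqrt_le_sqrt hw
    _ = 1 := Real.sqrt_one

lemma soCone_single {k : ℕ} (c : ℝ) (hc : 0 ≤ c) : (Pi.single 0 c : Fin (k+1) → ℝ) ∈ soCone k := by
  simp only [soCone, Set.mem_setOf_eq]
  have h1 : ∀ i : Fin k, (Pi.single (0 : Fin (k+1)) c : Fin (k+1) → ℝ) i.succ = 0 :=
    fun i => Pi.single_eq_of_ne (Fin.succ_ne_zero i) c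
  simp only [h1, Pi.single_eq_same]
  simpa using hc


theorem dir1 (a b : ℕ) (E : Matrix (Fin (a + 1)) (Fin (b + 1)) ℝ) :
    E ∈ minTensorSO a b →
      traceNorm (Matrix.of fun (i : Fin a) (j : Fin b) => E i.succ j.succ) ≤ E 0 0 := by
  intro hE
  set M : Matrix (Fin a) (Fin b) ℝ := Matrix.of fun i j => E i.succ j.succ with hM
  obtain ⟨σ, u, v, hσ0, hσsum, hu_le, hu_eq, hv_norm, hu_orth, hv_orth, hdec⟩ := svd_aux M
  have hv_le : ∀ k, ∑ j, (v k j)^2 ≤ 1 := fun k => le_of_eq (hv_norm k)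
  set φ : Matrix (Fin (a+1)) (Fin (b+1)) ℝ → ℝ :=
    fun F => F 0 0 - ∑ k, ∑ i, ∑ j, (u k i * v k j) * F i.succ j.succ with hφ
  have hφ_lin : ∀ (p q : ℝ) (F G : Matrix (Fin (a+1)) (Fin (b+1)) ℝ),
      φ (p • F + q • G) = p * φ F + q * φ G := by
    intro p q F G
    have hsum : ∑ k, ∑ i, ∑ j, (u k i * v k j) * (p • F + q • G) i.succ j.succ
        = p * (∑ k, ∑ i, ∑ j, (u k i * v k j) * F i.succ j.succ)
          + q * (∑ k, ∑ i, ∑ j, (u k i * v k j) * G i.succ j.succ) := by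
      rw [Finset.mul_sum, Finset.mul_sum, ← Finset.sum_add_distrib]
      refine Finset.sum_congr rfl fun k _ => ?_
      rw [Finset.mul_sum, Finset.mul_sum, ← Finset.sum_add_distrib]
      refine Finset.sum_congr rfl fun i _ => ?_
      rw [Finset.mul_sum, Finset.mul_sum, ← Finset.sum_add_distrib]
      refine Finset.sum_congr rfl fun j _ => ?_
      simp only [Matrix.add_apply, Matrix.smul_apply, smul_eq_mul]
      ring
    simp only [hφ]
    rw [hsum]
    simp only [Matrix.add_apply, Matrix.smul_apply, smul_eq_mul]
    ring
  have hconv : Convex ℝ {F : Matrix (Fin (a+1)) (Fin (b+1)) ℝ | 0 ≤ φ F} := by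
    intro F hF G hG p q hp hq hpq
    simp only [Set.mem_setOf_eq] at hF hG ⊢
    rw [hφ_lin]
    exact add_nonneg (mul_nonneg hp hF) (mul_nonneg hq hG)
  have hgen : {X : Matrix (Fin (a+1)) (Fin (b+1)) ℝ |
      ∃ x ∈ soCone a, ∃ y ∈ soCone b, X = Matrix.of fun i j => x i * y j}
      ⊆ {F | 0 ≤ φ F} := by
    rintro X ⟨x, hx, y, hy, rfl⟩
    simp only [Set.mem_setOf_eq, hφ, Matrix.of_apply]
    set c : Fin b → ℝ := fun k => ∑ i, u k i * x i.succ with hc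
    set d : Fin b → ℝ := fun k => ∑ j, v k j * y j.succ with hd
    have hsum : ∑ k, ∑ i, ∑ j, (u k i * v k j) * (x i.succ * y j.succ)
        = ∑ k, c k * d k := by
      refine Finset.sum_congr rfl fun k _ => ?_
      rw [show c k * d k = ∑ i : Fin a, ∑ j : Fin b, (u k i * x i.succ) * (v k j * y j.succ) from
        Finset.sum_mul_sum _ _ _ _]
      exact Finset.sum_congr rfl fun i _ => Finset.sum_congr rfl fun j _ => by ring
    rw [hsum]
    have hcs : (∑ k, c k * d k)^2 ≤ (∑ k, (c k)^2) * (∑ k, (d k)^2) :=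
      Finset.sum_mul_sq_le_sq_mul_sq Finset.univ c d
    have hbc : ∑ k, (c k)^2 ≤ ∑ i : Fin a, (x i.succ)^2 :=
      bessel_aux u hu_le hu_orth (fun i => x i.succ)
    have hbd : ∑ k, (d k)^2 ≤ ∑ j : Fin b, (y j.succ)^2 :=
      bessel_aux v hv_le hv_orth (fun j => y j.succ)
    have hx0 : Real.sqrt (∑ i : Fin a, (x i.succ)^2) ≤ x 0 := hx
    have hy0 : Real.sqrt (∑ j : Fin b, (y j.succ)^2) ≤ y 0 := hy
    have hcd : ∑ k, c k * d k ≤ x 0 * y 0 := by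
      have h1 : ∑ k, c k * d k ≤ Real.sqrt ((∑ k, (c k)^2) * (∑ k, (d k)^2)) := by
        calc ∑ k, c k * d k ≤ |∑ k, c k * d k| := le_abs_self _
          _ = Real.sqrt ((∑ k, c k * d k)^2) := (Real.sqrt_sq_eq_abs _).symm
          _ ≤ Real.sqrt ((∑ k, (c k)^2) * (∑ k, (d k)^2)) := Real.sqrt_le_sqrt hcs
      have h2 : Real.sqrt ((∑ k, (c k)^2) * (∑ k, (d k)^2))
          = Real.sqrt (∑ k, (c k)^2) * Real.sqrt (∑ k, (d k)^2) :=
        Real.sqrt_mul (Finset.sum_nonneg fun k _ => sq_nonneg _) _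
      have h3 : Real.sqrt (∑ k, (c k)^2) ≤ x 0 :=
        le_trans (Real.sqrt_le_sqrt hbc) hx0
      have h4 : Real.sqrt (∑ k, (d k)^2) ≤ y 0 :=
        le_trans (Real.sqrt_le_sqrt hbd) hy0
      calc ∑ k, c k * d k ≤ _ := h1
        _ = _ := h2
        _ ≤ x 0 * y 0 :=
          mul_le_mul h3 h4 (Real.sqrt_nonneg _) (le_trans (Real.sqrt_nonneg _) hx0)
    linarith
  have hsub := convexHull_min hgen hconv
  have hEφ : 0 ≤ φ E := hsub hE
  have hkey : ∑ k, ∑ i, ∑ j, (u k i * v k j) * E i.succ j.succ = ∑ k, σ k := by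
    refine Finset.sum_congr rfl fun k _ => ?_
    have hME : ∀ (i : Fin a) (j : Fin b), E i.succ j.succ = M i j := fun i j => rfl
    calc ∑ i, ∑ j, (u k i * v k j) * E i.succ j.succ
        = ∑ i, ∑ j, ∑ l, σ l * ((u k i * u l i) * (v k j * v l j)) := by
          refine Finset.sum_congr rfl fun i _ => Finset.sum_congr rfl fun j _ => ?_
          rw [hME i j, hdec i j, Finset.mul_sum]
          refine Finset.sum_congr rfl fun l _ => by ring
      _ = ∑ i, ∑ l, ∑ j, σ l * ((u k i * u l i) * (v k j * v l j)) :=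
          Finset.sum_congr rfl fun i _ => Finset.sum_comm
      _ = ∑ l, ∑ i, ∑ j, σ l * ((u k i * u l i) * (v k j * v l j)) := Finset.sum_comm
      _ = ∑ l, σ l * ((∑ i, u k i * u l i) * (∑ j, v k j * v l j)) := by
          refine Finset.sum_congr rfl fun l _ => ?_
          rw [show (∑ i, u k i * u l i) * (∑ j, v k j * v l j)
              = ∑ i, ∑ j, (u k i * u l i) * (v k j * v l j) from
            Finset.sum_mul_sum _ _ _ _, Finset.mul_sum]
          exact Finset.sum_congr rfl fun i _ => by rw [Finset.mul_sum]
      _ = σ k := by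
          rw [Finset.sum_eq_single k]
          · by_cases hk : σ k = 0
            · rw [hk]; ring
            · have h1 : ∑ i, u k i * u k i = 1 := by
                rw [Finset.sum_congr rfl fun i _ => (pow_two (u k i)).symm]
                exact hu_eq k hk
              have h2 : ∑ j, v k j * v k j = 1 := by
                rw [Finset.sum_congr rfl fun j _ => (pow_two (v k j)).symm]
                exact hv_norm k
              rw [h1, h2]; ring
          · intro l _ hl
            rw [hu_orth k l (Ne.symm hl)]
            ring
          · simp
  simp only [hφ, hkey] at hEφ
  linarith

theorem dir2 (a b : ℕ) (E : Matrix (Fin (a + 1)) (Fin (b + 1)) ℝ) :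
    ((∀ i : Fin a, E i.succ 0 = 0) ∧ (∀ j : Fin b, E 0 j.succ = 0) ∧
        traceNorm (Matrix.of fun (i : Fin a) (j : Fin b) => E i.succ j.succ) ≤ E 0 0) →
      E ∈ minTensorSO a b := by
  rintro ⟨h1, h2, h3⟩
  set M : Matrix (Fin a) (Fin b) ℝ := Matrix.of fun i j => E i.succ j.succ with hM
  obtain ⟨σ, u, v, hσ0, hσsum, hu_le, hu_eq, hv_norm, hu_orth, hv_orth, hdec⟩ := svd_aux M
  set c₀ : ℝ := E 0 0 - ∑ k, σ k with hc₀
  have hc₀0 : 0 ≤ c₀ := by rw [hc₀, hσsum]; linarith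
  set ε : Bool → ℝ := fun s => if s then -1 else 1 with hε
  set X : Option (Fin b × Bool) → (Fin (a+1) → ℝ) := fun t =>
    match t with
    | none => Pi.single 0 c₀
    | some (k, s) => (σ k / 2) • (Fin.cons 1 (fun i => ε s * u k i) : Fin (a+1) → ℝ) with hX
  set Y : Option (Fin b × Bool) → (Fin (b+1) → ℝ) := fun t =>
    match t with
    | none => Pi.single 0 1
    | some (k, s) => (Fin.cons 1 (fun j => ε s * v k j) : Fin (b+1) → ℝ) with hY
  have hXmem : ∀ t, X t ∈ soCone a := by
    rintro (_ | ⟨k, s⟩)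
    · exact soCone_single c₀ hc₀0
    · refine soCone_smul _ (by have := hσ0 k; linarith) (soCone_cons _ ?_)
      have : ∑ i, (ε s * u k i)^2 = (ε s)^2 * ∑ i, (u k i)^2 := by
        rw [Finset.mul_sum]; exact Finset.sum_congr rfl fun i _ => by ring
      rw [this]
      have hε2 : (ε s)^2 = 1 := by cases s <;> simp [hε]
      rw [hε2, one_mul]
      exact hu_le k
  have hYmem : ∀ t, Y t ∈ soCone b := by
    rintro (_ | ⟨k, s⟩)
    · exact soCone_single 1 zero_le_one
    · refine soCone_cons _ ?_
      have : ∑ j, (ε s * v k j)^2 = (ε s)^2 * ∑ j, (v k j)^2 := by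
        rw [Finset.mul_sum]; exact Finset.sum_congr rfl fun j _ => by ring
      have hε2 : (ε s)^2 = 1 := by cases s <;> simp [hε]
      rw [this, hε2, one_mul, hv_norm k]
  have hsum : E = ∑ t : Option (Fin b × Bool), Matrix.of fun i j => X t i * Y t j := by
    ext i j
    rw [Matrix.sum_apply]
    simp only [Matrix.of_apply]
    rw [Fintype.sum_option, Fintype.sum_prod_type]
    have hbool : ∀ k : Fin b, ∑ s : Bool, X (some (k, s)) i * Y (some (k, s)) j
        = X (some (k, false)) i * Y (some (k, false)) j
          + X (some (k, true)) i * Y (some (k, true)) j := fun k => by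
      rw [Fintype.sum_bool]; ring
    rw [Finset.sum_congr rfl fun k _ => hbool k]
    induction i using Fin.cases with
    | zero =>
      induction j using Fin.cases with
      | zero =>
        simp only [hX, hY, Pi.single_eq_same, Pi.smul_apply, Fin.cons_zero, smul_eq_mul]
        have : ∑ k : Fin b, (σ k / 2 * 1 * 1 + σ k / 2 * 1 * 1) = ∑ k, σ k :=
          Finset.sum_congr rfl fun k _ => by ring
        rw [this, hc₀]
        ring
      | succ j =>
        simp only [hX, hY, Pi.single_eq_same, Pi.smul_apply, Fin.cons_zero, Fin.cons_succ,
          smul_eq_mul, Pi.single_eq_of_ne (Fin.succ_ne_zero j)]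
        rw [h2 j]
        have : ∀ k : Fin b, σ k / 2 * 1 * (ε false * v k j) + σ k / 2 * 1 * (ε true * v k j)
            = 0 := fun k => by simp [hε]
        rw [Finset.sum_congr rfl fun k _ => this k]
        simp
    | succ i =>
      induction j using Fin.cases with
      | zero =>
        simp only [hX, hY, Pi.single_eq_same, Pi.smul_apply, Fin.cons_zero, Fin.cons_succ,
          smul_eq_mul, Pi.single_eq_of_ne (Fin.succ_ne_zero i)]
        rw [h1 i]
        have : ∀ k : Fin b, σ k / 2 * (ε false * u k i) * 1 + σ k / 2 * (ε true * u k i) * 1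
            = 0 := fun k => by simp [hε]
        rw [Finset.sum_congr rfl fun k _ => this k]
        simp
      | succ j =>
        simp only [hX, hY, Pi.smul_apply, Fin.cons_succ, smul_eq_mul,
          Pi.single_eq_of_ne (Fin.succ_ne_zero i), Pi.single_eq_of_ne (Fin.succ_ne_zero j)]
        have : ∀ k : Fin b, σ k / 2 * (ε false * u k i) * (ε false * v k j)
            + σ k / 2 * (ε true * u k i) * (ε true * v k j) = σ k * (u k i * v k j) :=
          fun k => by simp [hε]; ring
        rw [Finset.sum_congr rfl fun k _ => this k]
        have hEM : E i.succ j.succ = M i j := rfl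
        rw [hEM, hdec i j]
        ring
  -- conclude membership via centerMass
  set N : ℝ := (Fintype.card (Option (Fin b × Bool)) : ℝ) with hN
  have hNpos : (0:ℝ) < N := by
    rw [hN]
    exact_mod_cast Fintype.card_pos
  set Z : Option (Fin b × Bool) → Matrix (Fin (a+1)) (Fin (b+1)) ℝ :=
    fun t => Matrix.of fun i j => (N • X t) i * Y t j with hZ
  have hZsmul : ∀ t, Z t = N • (Matrix.of fun i j => X t i * Y t j) := by
    intro t
    ext i j
    simp only [hZ, Matrix.of_apply, Matrix.smul_apply, Pi.smul_apply, smul_eq_mul]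
    ring
  have hwpos : (0:ℝ) < ∑ _t : Option (Fin b × Bool), (1:ℝ) :=
    Finset.sum_pos (fun _ _ => one_pos) Finset.univ_nonempty
  have hwsum : ∑ _t : Option (Fin b × Bool), (1:ℝ) = N := by
    rw [Finset.sum_const, nsmul_eq_mul, mul_one, hN, Finset.card_univ]
  have hcm : Finset.univ.centerMass (fun _ : Option (Fin b × Bool) => (1:ℝ)) Z = E := by
    rw [Finset.centerMass]
    simp only [one_smul]
    rw [Finset.sum_congr rfl fun t _ => hZsmul t, ← Finset.smul_sum, ← hsum, hwsum, smul_smul,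
      inv_mul_cancel₀ hNpos.ne', one_smul]
  rw [minTensorSO, ← hcm]
  exact Finset.centerMass_mem_convexHull _ (fun t _ => zero_le_one) hwpos
    (fun t _ => ⟨N • X t, soCone_smul N hNpos.le (hXmem t), Y t, hYmem t, rfl⟩)

/-- Separability criterion for effects on two second-order cones: membership in
the minimal tensor product implies `‖Ē‖₁ ≤ E₀₀`, and conversely if all the
cross terms of `E` vanish then `‖Ē‖₁ ≤ E₀₀` implies membership. -/
theorem minTensorSO_traceNorm_criterion (a b : ℕ) (E : Matrix (Fin (a + 1)) (Fin (b + 1)) ℝ) :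
    (E ∈ minTensorSO a b →
      traceNorm (Matrix.of fun (i : Fin a) (j : Fin b) => E i.succ j.succ) ≤ E 0 0) ∧
    (((∀ i : Fin a, E i.succ 0 = 0) ∧ (∀ j : Fin b, E 0 j.succ = 0) ∧
        traceNorm (Matrix.of fun (i : Fin a) (j : Fin b) => E i.succ j.succ) ≤ E 0 0) →
      E ∈ minTensorSO a b) :=
  ⟨dir1 a b E, dir2 a b E⟩
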